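/- Let G be a group and let N be the union of all R-invisible subgroups of G (which is a normal subgroup since R-invisible subgroups are closed under products). Then the quotient group G/N has no nontrivial R-invisible subgroup. -/

import Mathlib

open scoped TensorProduct

/-- The set of denominators of (reduced fractional expressions of) elements of `R ⊆ ℚ`. -/
def DR (R : Subring ℚ) : Set ℕ := {d | ∃ q ∈ R, q.den = d}

variable {G H A : Type*} [Group G] [Group H] [Group A]

/-- Evaluation of a monomial over `G` in `n` indeterminates at a tuple of elements of `G`. -/
noncomputable def evalWord {n : ℕ} (g : Fin n → G) :
    Monoid.Coprod G (FreeGroup (Fin n)) →* G :=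
  Monoid.Coprod.lift (MonoidHom.id G) (FreeGroup.lift g)

/-- The projection `G * F → F → F/[F,F]`. -/
noncomputable def toFreeAb (G : Type*) [Group G] (n : ℕ) :
    Monoid.Coprod G (FreeGroup (Fin n)) →* Abelianization (FreeGroup (Fin n)) :=
  Monoid.Coprod.lift 1 Abelianization.of

/-- An `R`-nullhomologous system of equations `xᵢ^e = wᵢ(x₁,…,xₙ)` over `G`. -/
structure NullSys (R : Subring ℚ) (G : Type*) [Group G] where
  n : ℕ
  e : ℕ
  he : e ∈ DR R
  w : Fin n → Monoid.Coprod G (FreeGroup (Fin n))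
  nullh : ∀ i, toFreeAb G n (w i) = 1

/-- A solution of a system of equations over `G`. -/
def NullSys.IsSolution {R : Subring ℚ} (S : NullSys R G) (g : Fin S.n → G) : Prop :=
  ∀ i, (g i) ^ S.e = evalWord g (S.w i)

/-- A group is `R`-closed if every `R`-nullhomologous system over it has a unique solution. -/
def IsRClosed (R : Subring ℚ) (A : Type*) [Group A] : Prop :=
  ∀ S : NullSys R A, ∃! g : Fin S.n → A, S.IsSolution g

/-- A normal subgroup `N ≤ G` is `R`-invisible if it is normally finitely generated and every
element of `N/[G,N]` has (finite) order lying in `D_R`. -/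
def IsRInvisible (R : Subring ℚ) {G : Type*} [Group G] (N : Subgroup G) : Prop :=
  N.Normal ∧
  (∃ s : Finset G, ↑s ⊆ (N : Set G) ∧ Subgroup.normalClosure ↑s = N) ∧
  ∀ x ∈ N, ∃ e ∈ DR R, x ^ e ∈ ⁅(⊤ : Subgroup G), N⁆


lemma DR.one_mem (R : Subring ℚ) : 1 ∈ DR R := ⟨0, R.zero_mem, Rat.den_zero⟩

lemma DR.pos {R : Subring ℚ} {d : ℕ} (hd : d ∈ DR R) : 0 < d := by
  obtain ⟨q, -, rfl⟩ := hd; exact q.pos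

lemma DR.inv_mem {R : Subring ℚ} {d : ℕ} (hd : d ∈ DR R) : ((d : ℚ))⁻¹ ∈ R := by
  obtain ⟨q, hq, rfl⟩ := hd
  set u := Int.gcdA q.num q.den with hu
  set v := Int.gcdB q.num q.den with hv
  have hb : (1 : ℤ) = q.num * u + q.den * v := by
    have h1 : Int.gcd q.num q.den = 1 := by
      simpa [Int.gcd] using q.reduced
    have := Int.gcd_eq_gcd_ab q.num q.den
    rw [h1] at this
    exact_mod_cast this
  have hden : ((q.den : ℚ)) ≠ 0 := by
    exact_mod_cast q.den_pos.ne'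
  have hnum : q * (q.den : ℚ) = (q.num : ℚ) := by
    nth_rewrite 1 [← Rat.num_div_den q]
    exact div_mul_cancel₀ _ hden
  have key : ((q.den : ℚ))⁻¹ = (u : ℚ) * q + (v : ℚ) := by
    rw [eq_comm]
    apply eq_inv_of_mul_eq_one_left
    calc ((u : ℚ) * q + (v : ℚ)) * (q.den : ℚ)
        = (u : ℚ) * (q * q.den) + (q.den : ℚ) * v := by ring
      _ = ((q.num * u + q.den * v : ℤ) : ℚ) := by rw [hnum]; push_cast; ring
      _ = 1 := by rw [← hb]; norm_num
  rw [key]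
  exact add_mem (mul_mem (intCast_mem R u) hq) (intCast_mem R v)

lemma DR.mul_mem {R : Subring ℚ} {a b : ℕ} (ha : a ∈ DR R) (hb : b ∈ DR R) :
    a * b ∈ DR R := by
  have hmem : (((a * b : ℕ)) : ℚ)⁻¹ ∈ R := by
    push_cast
    rw [mul_inv]
    exact R.mul_mem (DR.inv_mem ha) (DR.inv_mem hb)
  exact ⟨(((a * b : ℕ)) : ℚ)⁻¹, hmem, Rat.inv_natCast_den_of_pos (Nat.mul_pos (DR.pos ha) (DR.pos hb))⟩

/-- The subgroup of elements of `L` that are `DR`-torsion modulo `⁅G, L⁆`. -/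
def torsionPart (R : Subring ℚ) (L : Subgroup G) [L.Normal] : Subgroup G where
  carrier := {x | x ∈ L ∧ ∃ e ∈ DR R, x ^ e ∈ ⁅(⊤ : Subgroup G), L⁆}
  one_mem' := ⟨one_mem L, 1, DR.one_mem R, by simpa using Subgroup.one_mem _⟩
  inv_mem' := by
    rintro x ⟨hxL, e, he, hxe⟩
    exact ⟨inv_mem hxL, e, he, by rw [inv_pow]; exact inv_mem hxe⟩
  mul_mem' := by
    rintro x y ⟨hxL, e, he, hxe⟩ ⟨hyL, f, hf, hyf⟩
    refine ⟨mul_mem hxL hyL, e * f, DR.mul_mem he hf, ?_⟩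
    set T := ⁅(⊤ : Subgroup G), L⁆ with hT
    let π := QuotientGroup.mk' T
    have hx1 : π x ^ e = 1 := by
      rw [← map_pow]; exact (QuotientGroup.eq_one_iff _).2 hxe
    have hy1 : π y ^ f = 1 := by
      rw [← map_pow]; exact (QuotientGroup.eq_one_iff _).2 hyf
    have hc : Commute (π x) (π y) := by
      rw [← commutatorElement_eq_one_iff_commute, ← map_commutatorElement]
      exact (QuotientGroup.eq_one_iff _).2
        (Subgroup.commutator_mem_commutator (Subgroup.mem_top x) hyL)
    have : π ((x * y) ^ (e * f)) = 1 := by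
      rw [map_pow, map_mul, hc.mul_pow, pow_mul, hx1, one_pow, one_mul, pow_mul', hy1, one_pow]
    exact (QuotientGroup.eq_one_iff _).1 this

lemma mem_torsionPart {R : Subring ℚ} {L : Subgroup G} [L.Normal] {x : G} :
    x ∈ torsionPart R L ↔ x ∈ L ∧ ∃ e ∈ DR R, x ^ e ∈ ⁅(⊤ : Subgroup G), L⁆ := Iff.rfl

lemma torsionPart_normal (R : Subring ℚ) (L : Subgroup G) [L.Normal] :
    (torsionPart R L).Normal := by
  constructor
  rintro x ⟨hxL, e, he, hxe⟩ g
  refine ⟨‹L.Normal›.conj_mem x hxL g, e, he, ?_⟩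
  rw [conj_pow]
  exact (Subgroup.commutator_normal ⊤ L).conj_mem _ hxe g

lemma IsRInvisible.bot (R : Subring ℚ) : IsRInvisible R (⊥ : Subgroup G) := by
  refine ⟨inferInstance, ⟨∅, by simp, le_bot_iff.1 (Subgroup.normalClosure_le_normal (by simp))⟩,
    fun x hx => ⟨1, DR.one_mem R, ?_⟩⟩
  rw [Subgroup.mem_bot.1 hx]
  simpa using Subgroup.one_mem _

lemma IsRInvisible.sup {R : Subring ℚ} {K₁ K₂ : Subgroup G} (h₁ : IsRInvisible R K₁)
    (h₂ : IsRInvisible R K₂) : IsRInvisible R (K₁ ⊔ K₂) := by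
  classical
  obtain ⟨n₁, ⟨s₁, hs₁, hc₁⟩, ht₁⟩ := h₁
  obtain ⟨n₂, ⟨s₂, hs₂, hc₂⟩, ht₂⟩ := h₂
  haveI := n₁; haveI := n₂
  have hsub1 : (↑(s₁ ∪ s₂) : Set G) ⊆ ↑(K₁ ⊔ K₂) := by
    rw [Finset.coe_union]
    exact Set.union_subset (hs₁.trans (SetLike.coe_subset_coe.2 le_sup_left))
      (hs₂.trans (SetLike.coe_subset_coe.2 le_sup_right))
  refine ⟨inferInstance, ⟨s₁ ∪ s₂, hsub1, ?_⟩, ?_⟩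
  · apply le_antisymm (Subgroup.normalClosure_le_normal hsub1)
    rw [Finset.coe_union, ← hc₁, ← hc₂] -- careful: rewrite in goal K₁ ⊔ K₂ ≤ ...
    exact sup_le (Subgroup.normalClosure_mono Set.subset_union_left)
      (Subgroup.normalClosure_mono Set.subset_union_right)
  · have key : K₁ ⊔ K₂ ≤ torsionPart R (K₁ ⊔ K₂) := by
      refine sup_le (fun x hx => ?_) (fun x hx => ?_)
      · obtain ⟨e, he, hxe⟩ := ht₁ x hx
        exact ⟨SetLike.le_def.mp le_sup_left hx, e, he, Subgroup.commutator_mono le_rfl le_sup_left hxe⟩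
      · obtain ⟨e, he, hxe⟩ := ht₂ x hx
        exact ⟨SetLike.le_def.mp le_sup_right hx, e, he, Subgroup.commutator_mono le_rfl le_sup_right hxe⟩
    exact fun x hx => ((key hx)).2

lemma exists_invisible_of_mem_iSup {R : Subring ℚ} {x : G}
    (hx : x ∈ ⨆ (K : Subgroup G) (_ : IsRInvisible R K), K) :
    ∃ K : Subgroup G, IsRInvisible R K ∧ x ∈ K := by
  rw [iSup_subtype'] at hx
  haveI : Nonempty {K : Subgroup G // IsRInvisible R K} := ⟨⟨⊥, IsRInvisible.bot R⟩⟩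
  have hdir : Directed (· ≤ ·) fun i : {K : Subgroup G // IsRInvisible R K} => i.1 :=
    fun i j => ⟨⟨i.1 ⊔ j.1, i.2.sup j.2⟩, le_sup_left, le_sup_right⟩
  obtain ⟨i, hi⟩ := (Subgroup.mem_iSup_of_directed hdir).1 hx
  exact ⟨i.1, i.2, hi⟩

lemma exists_invisible_forall {R : Subring ℚ} {α : Type*} (t : Finset α)
    (P : α → Subgroup G → Prop)
    (hmono : ∀ a K K', K ≤ K' → P a K → P a K')
    (h : ∀ a ∈ t, ∃ K : Subgroup G, IsRInvisible R K ∧ P a K) :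
    ∃ K : Subgroup G, IsRInvisible R K ∧ ∀ a ∈ t, P a K := by
  classical
  induction t using Finset.induction with
  | empty => exact ⟨⊥, IsRInvisible.bot R, by simp⟩
  | insert a t' ha ih =>
    obtain ⟨K₁, hK₁, hP₁⟩ := h a (Finset.mem_insert_self a t')
    obtain ⟨K₂, hK₂, hP₂⟩ := ih (fun b hb => h b (Finset.mem_insert_of_mem hb))
    refine ⟨K₁ ⊔ K₂, hK₁.sup hK₂, fun b hb => ?_⟩
    rcases Finset.mem_insert.1 hb with rfl | hb
    · exact hmono _ _ _ le_sup_left hP₁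
    · exact hmono _ _ _ le_sup_right (hP₂ b hb)


/-- If `N` is the union (join) of all `R`-invisible subgroups of `G` (a normal subgroup), then
`G/N` has no nontrivial `R`-invisible subgroup. -/
theorem quotient_by_all_invisibles_has_no_invisible (R : Subring ℚ) {G : Type*} [Group G]
    (N : Subgroup G) [N.Normal]
    (hN : N = ⨆ (K : Subgroup G) (_ : IsRInvisible R K), K) :
    ∀ K : Subgroup (G ⧸ N), IsRInvisible R K → K = ⊥ := by
    classical
  intro Kbar hKbar
  obtain ⟨hnorm, ⟨sbar, hsub, hcl⟩, htor⟩ := hKbar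
  set π := QuotientGroup.mk' N with hπ
  set t : Finset G := sbar.image Quotient.out with ht
  have himg : π '' ↑t = ↑sbar := by
    rw [ht, Finset.coe_image, ← Set.image_comp]
    convert Set.image_id (↑sbar : Set (G ⧸ N)) using 1
    exact Set.image_congr fun q _ => QuotientGroup.out_eq' q
  set M := Subgroup.normalClosure (↑t : Set G) with hMdef
  haveI : M.Normal := Subgroup.normalClosure_normal
  have hM : M.map π = Kbar := by
    rw [hMdef, Subgroup.map_normalClosure _ _ (QuotientGroup.mk'_surjective N), himg, hcl]
  -- for each generator, find data
  have hgen : ∀ g ∈ t, ∃ K : Subgroup G, IsRInvisible R K ∧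
      ∃ e ∈ DR R, ∃ m ∈ K, ∃ c ∈ ⁅(⊤ : Subgroup G), M⁆, g ^ e = m * c := by
    intro g hg
    have hπg : π g ∈ Kbar := by
      rw [← hcl]
      exact Subgroup.subset_normalClosure (by rw [← himg]; exact Set.mem_image_of_mem π hg)
    obtain ⟨e, he, hpe⟩ := htor _ hπg
    have hmem : (π g) ^ e ∈ (⁅(⊤ : Subgroup G), M⁆).map π := by
      rw [Subgroup.map_commutator, hM,
        Subgroup.map_top_of_surjective π (QuotientGroup.mk'_surjective N)]
      exact hpe
    obtain ⟨c, hc, hceq⟩ := hmem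
    have hmN : g ^ e * c⁻¹ ∈ N := by
      have h1 : π (g ^ e * c⁻¹) = 1 := by
        rw [map_mul, map_inv, map_pow, hceq, mul_inv_cancel]
      simpa using (QuotientGroup.eq_one_iff _).1 h1
    obtain ⟨K, hK, hmK⟩ := exists_invisible_of_mem_iSup (hN ▸ hmN)
    exact ⟨K, hK, e, he, g ^ e * c⁻¹, hmK, c, hc, (inv_mul_cancel_right _ c).symm⟩
  obtain ⟨K₀, hK₀, hK₀all⟩ := exists_invisible_forall t
    (fun g K => ∃ e ∈ DR R, ∃ m ∈ K, ∃ c ∈ ⁅(⊤ : Subgroup G), M⁆, g ^ e = m * c)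
    (by rintro a K K' hKK' ⟨e, he, m, hm, c, hc, heq⟩
        exact ⟨e, he, m, hKK' hm, c, hc, heq⟩)
    hgen
  obtain ⟨hK₀n, ⟨s₀, hs₀, hc₀⟩, ht₀⟩ := hK₀
  haveI := hK₀n
  set L := M ⊔ K₀ with hL
  haveI : L.Normal := Subgroup.sup_normal M K₀
  have hsubL : (↑(t ∪ s₀) : Set G) ⊆ ↑L := by
    rw [Finset.coe_union]
    refine Set.union_subset (Subgroup.subset_normalClosure.trans
      (SetLike.coe_subset_coe.2 le_sup_left)) (hs₀.trans (SetLike.coe_subset_coe.2 le_sup_right))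
  have hclL : Subgroup.normalClosure ↑(t ∪ s₀) = L := by
    apply le_antisymm (Subgroup.normalClosure_le_normal hsubL)
    rw [Finset.coe_union]
    refine sup_le ?_ ?_
    · exact Subgroup.normalClosure_mono Set.subset_union_left
    · rw [← hc₀]; exact Subgroup.normalClosure_mono Set.subset_union_right
  have hLinv : IsRInvisible R L := by
    refine ⟨inferInstance, ⟨t ∪ s₀, hsubL, hclL⟩, ?_⟩
    haveI := torsionPart_normal R L
    have key' : Subgroup.normalClosure ↑(t ∪ s₀) ≤ torsionPart R L := by
      apply Subgroup.normalClosure_le_normal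
      intro x hx
      rw [Finset.coe_union] at hx
      rcases hx with hx | hx
      · -- x ∈ t
        obtain ⟨e, he, m, hmK₀, c, hc, heq⟩ := hK₀all x hx
        obtain ⟨e', he', hme'⟩ := ht₀ m hmK₀
        refine SetLike.mem_coe.2 (mem_torsionPart.2 ⟨SetLike.le_def.mp le_sup_left
          (Subgroup.subset_normalClosure hx), e * e', DR.mul_mem he he', ?_⟩)
        set T := ⁅(⊤ : Subgroup G), L⁆ with hT
        let ρ := QuotientGroup.mk' T
        have hc1 : ρ c = 1 := (QuotientGroup.eq_one_iff _).2
          (Subgroup.commutator_mono le_rfl le_sup_left hc)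
        have hm1 : ρ m ^ e' = 1 := by
          rw [← map_pow]
          exact (QuotientGroup.eq_one_iff _).2
            (Subgroup.commutator_mono le_rfl le_sup_right hme')
        have hρ : ρ (x ^ (e * e')) = 1 := by
          rw [pow_mul, map_pow, heq, map_mul, hc1, mul_one]; exact hm1
        exact (QuotientGroup.eq_one_iff _).1 hρ
      · -- x ∈ s₀
        obtain ⟨e, he, hxe⟩ := ht₀ x (hs₀ hx)
        exact SetLike.mem_coe.2 (mem_torsionPart.2 ⟨SetLike.le_def.mp le_sup_right (hs₀ hx),
          e, he, Subgroup.commutator_mono le_rfl le_sup_right hxe⟩)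
    have key : L ≤ torsionPart R L := hclL.symm.trans_le key'
    exact fun x hx => (mem_torsionPart.1 (key hx)).2
  -- conclude
  have hLle : L ≤ N := by
    rw [hN]
    exact le_iSup_of_le L (le_iSup_of_le hLinv le_rfl)
  have hMN : M ≤ N := le_trans le_sup_left hLle
  rw [← hM, eq_bot_iff]
  rintro y ⟨x, hxM, rfl⟩
  exact Subgroup.mem_bot.2 ((QuotientGroup.eq_one_iff x).2 (hMN hxM))
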